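/- Category structure of the output of Algorithm STO: assume p_i ≥ 0 and d_max,i ≥ 0 for all i, ŝ(0)_i ≤ s⁺_i for all i ∈ {0,…,l−1}, and ŝ(0)_{l−1} + t_{l−1} ≤ T. Let (s*, d*) be the output of Algorithm STO, with the conventions s*_l := T and s⁺_l := T. Then every index i ∈ {0,…,l−1} satisfies at least one of: (a) d*_i = d_max,i; (b) d*_i = 0; (c) there exists k ≥ 0 with i + k + 1 ≤ l such that s*_j + d*_j + t_j = s*_{j+1} for all j ∈ {i,…,i+k} and s*_{i+k+1} = s⁺_{i+k+1}. -/

import Mathlib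

/-- Feasibility for the service-time LP: time-window bounds on start times,
bounds on service times, and the chain constraints with the convention `s_l := T`. -/
def Feasible (l : ℕ) (T : ℝ) (t dmax smin smax s d : ℕ → ℝ) : Prop :=
  (∀ i < l, smin i ≤ s i ∧ s i ≤ smax i) ∧
  (∀ i < l, 0 ≤ d i ∧ d i ≤ dmax i) ∧
  (∀ i < l, s i + d i + t i ≤ (if i + 1 = l then T else s (i + 1)))

/-- The earliest-start schedule: `ŝ(d)_0 := s⁻_0` and
`ŝ(d)_{i+1} := max { ŝ(d)_i + d_i + t_i, s⁻_{i+1} }`. -/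
def sHat (t smin d : ℕ → ℝ) : ℕ → ℝ
  | 0 => smin 0
  | i + 1 => max (sHat t smin d i + d i + t i) (smin (i + 1))

/-- One iteration of Algorithm STO: process index `a`, setting
`d_a := min { d_max,a, min_{j=a+1}^{l} ( s⁺_j - ŝ(d)_a - Σ_{m=a}^{j-1} (d_m + t_m) ) }`,
with the conventions `s⁺_l := T` and `d_a = 0` inside the sum. -/
def stoStep (l : ℕ) (T : ℝ) (t dmax smin smax : ℕ → ℝ) (d : ℕ → ℝ) (a : ℕ) : ℕ → ℝ :=
  if h : a < l then
    Function.update d a (min (dmax a)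
      ((Finset.Icc (a + 1) l).inf' (Finset.nonempty_Icc.mpr (by omega))
        fun j => (if j = l then T else smax j) - sHat t smin d a
          - ∑ m ∈ Finset.Ico a j, ((if m = a then 0 else d m) + t m)))
  else d

/-- Service times produced by Algorithm STO after processing the indices in `order`,
starting from the all-zero service times. -/
def stoD (l : ℕ) (T : ℝ) (t dmax smin smax : ℕ → ℝ) (order : List ℕ) : ℕ → ℝ :=
  order.foldl (stoStep l T t dmax smin smax) fun _ => 0

namespace STOAux

variable (t smin : ℕ → ℝ)

lemma sHat_congr (d d' : ℕ → ℝ) : ∀ j, (∀ m < j, d m = d' m) → sHat t smin d j = sHat t smin d' j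
  | 0, _ => rfl
  | j+1, h => by
      simp only [sHat, sHat_congr d d' j (fun m hm => h m (by omega)), h j (by omega)]

lemma sHat_mono (d d' : ℕ → ℝ) : ∀ j, (∀ m < j, d m ≤ d' m) → sHat t smin d j ≤ sHat t smin d' j
  | 0, _ => le_refl _
  | j+1, h => by
      have h2 := sHat_mono d d' j (fun m hm => h m (by omega))
      have h3 := h j (Nat.lt_succ_self j)
      simp only [sHat]
      exact max_le_max (by linarith) le_rfl

lemma le_sHat_succ (d : ℕ → ℝ) (j : ℕ) :
    sHat t smin d j + d j + t j ≤ sHat t smin d (j+1) := le_max_left _ _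

lemma smin_le_sHat (d : ℕ → ℝ) : ∀ j, smin j ≤ sHat t smin d j
  | 0 => le_refl _
  | j+1 => le_max_right _ _

lemma sHat_chain (d : ℕ → ℝ) (i : ℕ) : ∀ j, i ≤ j →
    sHat t smin d i + ∑ m ∈ Finset.Ico i j, (d m + t m) ≤ sHat t smin d j := by
  intro j hj
  induction j, hj using Nat.le_induction with
  | base => simp
  | succ j hj ih =>
    rw [Finset.sum_Ico_succ_top hj]
    have := le_sHat_succ t smin d j
    linarith

/-- `E d j` is `ŝ(d)_j` for `j < l` and `ŝ(d)_{l-1} + d_{l-1} + t_{l-1}` for `j = l`. -/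
def E (l : ℕ) (d : ℕ → ℝ) (j : ℕ) : ℝ :=
  if j = l then sHat t smin d (l-1) + d (l-1) + t (l-1) else sHat t smin d j

lemma E_chain (l : ℕ) (d : ℕ → ℝ) (i j : ℕ) (hi : i < l) (hij : i ≤ j) (hj : j ≤ l) :
    sHat t smin d i + ∑ m ∈ Finset.Ico i j, (d m + t m) ≤ E t smin l d j := by
  unfold E
  split_ifs with h
  · rw [h]
    have h1 : i ≤ l - 1 := by omega
    have h2 : l - 1 + 1 = l := by omega
    have h3 := Finset.sum_Ico_succ_top h1 (fun m => d m + t m)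
    rw [h2] at h3
    rw [h3]
    have := sHat_chain t smin d i (l-1) h1
    linarith
  · exact sHat_chain t smin d i j hij

lemma E_update_le (l : ℕ) (d : ℕ → ℝ) (a : ℕ) (v : ℝ) (ha : a < l) :
    ∀ j, a < j → j ≤ l →
    E t smin l (Function.update d a v) j ≤
      max (E t smin l d j)
        (sHat t smin d a + ∑ m ∈ Finset.Ico a j, (Function.update d a v m + t m)) := by
  intro j hj
  induction j, hj using Nat.le_induction with
  | base =>
    intro hal
    have hsa : sHat t smin (Function.update d a v) a = sHat t smin d a :=
      sHat_congr t smin _ _ a (fun m hm => (Function.update_of_ne (by omega) _ _))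
    have hsum : ∑ m ∈ Finset.Ico a (a+1), (Function.update d a v m + t m) = v + t a := by
      simp [Function.update_self]
    rw [hsum]
    unfold E
    split_ifs with h
    · have hla : l - 1 = a := by omega
      rw [hla, hsa, Function.update_self]
      exact le_max_of_le_right (by linarith)
    · have hL : sHat t smin (Function.update d a v) (a+1)
          = max (sHat t smin (Function.update d a v) a + Function.update d a v a + t a)
            (smin (a+1)) := rfl
      rw [hL, Function.update_self, hsa]
      apply max_le
      · exact le_max_of_le_right (by linarith)
      · exact le_max_of_le_left (smin_le_sHat t smin d (a+1))
  | succ j hj ih =>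
    intro hjl
    have hjl' : j ≤ l := by omega
    have hji : j < l := by omega
    have ihj := ih hjl'
    have hEj : E t smin l d j = sHat t smin d j := by unfold E; rw [if_neg (by omega)]
    have hEj' : E t smin l (Function.update d a v) j = sHat t smin (Function.update d a v) j := by
      unfold E; rw [if_neg (by omega)]
    rw [hEj, hEj'] at ihj
    have hdj : Function.update d a v j = d j := Function.update_of_ne (by omega) _ _
    have hsum : ∑ m ∈ Finset.Ico a (j+1), (Function.update d a v m + t m)
        = (∑ m ∈ Finset.Ico a j, (Function.update d a v m + t m)) + (d j + t j) := by
      rw [Finset.sum_Ico_succ_top (by omega), hdj]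
    rw [hsum]
    unfold E
    split_ifs with h
    · have hlj : l - 1 = j := by omega
      rw [hlj, Function.update_of_ne (by omega)]
      rcases le_max_iff.mp ihj with h1 | h1
      · exact le_max_of_le_left (by linarith)
      · exact le_max_of_le_right (by linarith)
    · have hL : sHat t smin (Function.update d a v) (j+1)
          = max (sHat t smin (Function.update d a v) j + Function.update d a v j + t j)
            (smin (j+1)) := rfl
      rw [hL, hdj]
      apply max_le
      · rcases le_max_iff.mp ihj with h1 | h1
        · have := le_sHat_succ t smin d j
          exact le_max_of_le_left (by linarith)
        · exact le_max_of_le_right (by linarith)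
      · exact le_max_of_le_left (smin_le_sHat t smin d (j+1))


variable (l : ℕ) (T : ℝ) (dmax smax : ℕ → ℝ)

/-- Invariant: service times are nonnegative and the earliest-start schedule is feasible. -/
def Inv (d : ℕ → ℝ) : Prop :=
  (∀ m, 0 ≤ d m) ∧ ∀ j ≤ l, E t smin l d j ≤ (if j = l then T else smax j)

lemma stoStep_apply_ne (d : ℕ → ℝ) (a i : ℕ) (hai : a ≠ i) :
    stoStep l T t dmax smin smax d a i = d i := by
  unfold stoStep
  split_ifs with h
  · exact Function.update_of_ne (Ne.symm hai) _ _
  · rfl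

lemma foldl_apply_ne (i : ℕ) :
    ∀ (L : List ℕ) (d : ℕ → ℝ), i ∉ L →
      (L.foldl (stoStep l T t dmax smin smax) d) i = d i
  | [], d, _ => rfl
  | a :: L, d, h => by
    rw [List.foldl_cons, foldl_apply_ne i L _ (fun hm => h (List.mem_cons_of_mem a hm)),
      stoStep_apply_ne t smin l T dmax smax d a i (fun hai => h (hai ▸ List.mem_cons_self))]

lemma slack_nonneg (hdmax : ∀ i < l, 0 ≤ dmax i) (d : ℕ → ℝ) (a : ℕ) (ha : a < l)
    (h : Inv t smin l T smax d) (j : ℕ) (hj : j ∈ Finset.Icc (a+1) l) :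
    0 ≤ (if j = l then T else smax j) - sHat t smin d a
      - ∑ m ∈ Finset.Ico a j, ((if m = a then 0 else d m) + t m) := by
  rw [Finset.mem_Icc] at hj
  have hsum : ∑ m ∈ Finset.Ico a j, ((if m = a then 0 else d m) + t m)
      ≤ ∑ m ∈ Finset.Ico a j, (d m + t m) := by
    apply Finset.sum_le_sum
    intro m _
    split_ifs with hm
    · have := h.1 m; linarith
    · exact le_refl _
  have hch := E_chain t smin l d a j ha (by omega) hj.2
  have hfe := h.2 j hj.2
  linarith

lemma inv_step (hdmax : ∀ i < l, 0 ≤ dmax i) (d : ℕ → ℝ) (a : ℕ)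
    (h : Inv t smin l T smax d) :
    Inv t smin l T smax (stoStep l T t dmax smin smax d a) := by
  unfold stoStep
  split_ifs with ha
  swap
  · exact h
  set v := min (dmax a)
      ((Finset.Icc (a + 1) l).inf' (Finset.nonempty_Icc.mpr (by omega))
        fun j => (if j = l then T else smax j) - sHat t smin d a
          - ∑ m ∈ Finset.Ico a j, ((if m = a then 0 else d m) + t m)) with hv
  have hv0 : 0 ≤ v := by
    apply le_min (hdmax a ha)
    apply Finset.le_inf'
    exact slack_nonneg t smin l T dmax smax hdmax d a ha h
  constructor
  · intro m
    by_cases hm : m = a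
    · subst hm; rw [Function.update_self]; exact hv0
    · rw [Function.update_of_ne hm]; exact h.1 m
  · intro j hj
    by_cases hja : j ≤ a
    · have hjl : j < l := by omega
      have : E t smin l (Function.update d a v) j = E t smin l d j := by
        unfold E
        rw [if_neg (by omega), if_neg (by omega)]
        exact sHat_congr t smin _ _ j (fun m hm => Function.update_of_ne (by omega) _ _)
      rw [this]
      exact h.2 j hj
    · push_neg at hja
      refine le_trans (E_update_le t smin l d a v ha j hja hj) (max_le (h.2 j hj) ?_)
      have hsplit : ∑ m ∈ Finset.Ico a j, (Function.update d a v m + t m)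
          = v + ∑ m ∈ Finset.Ico a j, ((if m = a then 0 else d m) + t m) := by
        rw [Finset.sum_eq_sum_Ico_succ_bot hja, Finset.sum_eq_sum_Ico_succ_bot hja
          (fun m => (if m = a then 0 else d m) + t m), Function.update_self, if_pos rfl]
        have : ∑ m ∈ Finset.Ico (a+1) j, (Function.update d a v m + t m)
            = ∑ m ∈ Finset.Ico (a+1) j, ((if m = a then 0 else d m) + t m) := by
          apply Finset.sum_congr rfl
          intro m hm
          rw [Finset.mem_Ico] at hm
          rw [Function.update_of_ne (by omega), if_neg (by omega)]
        rw [this]; ring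
      have hvle : v ≤ (if j = l then T else smax j) - sHat t smin d a
          - ∑ m ∈ Finset.Ico a j, ((if m = a then 0 else d m) + t m) := by
        refine le_trans (min_le_right _ _) (Finset.inf'_le _ ?_)
        rw [Finset.mem_Icc]; omega
      rw [hsplit]
      linarith

lemma foldl_inv :
    ∀ (L : List ℕ) (d : ℕ → ℝ) (hdmax : ∀ i < l, 0 ≤ dmax i),
      Inv t smin l T smax d → Inv t smin l T smax (L.foldl (stoStep l T t dmax smin smax) d)
  | [], d, _, h => h
  | a :: L, d, hdmax, h =>
    foldl_inv L _ hdmax (inv_step t smin l T dmax smax hdmax d a h)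


lemma update_chain_sum (d : ℕ → ℝ) (a : ℕ) (v : ℝ) (j : ℕ) (haj : a < j) :
    ∑ m ∈ Finset.Ico a j, (Function.update d a v m + t m)
      = v + ∑ m ∈ Finset.Ico a j, ((if m = a then 0 else d m) + t m) := by
  rw [Finset.sum_eq_sum_Ico_succ_bot haj, Finset.sum_eq_sum_Ico_succ_bot haj
    (fun m => (if m = a then 0 else d m) + t m), Function.update_self, if_pos rfl]
  have : ∑ m ∈ Finset.Ico (a+1) j, (Function.update d a v m + t m)
      = ∑ m ∈ Finset.Ico (a+1) j, ((if m = a then 0 else d m) + t m) := by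
    apply Finset.sum_congr rfl
    intro m hm
    rw [Finset.mem_Ico] at hm
    rw [Function.update_of_ne (by omega), if_neg (by omega)]
  rw [this]; ring

end STOAux

/-- Category structure of the output of Algorithm STO: every index is (a) fully served,
(b) unserved, or (c) the head of a tight chain ending at a node whose start time hits the
end of its time window (with the conventions `s*_l := T` and `s⁺_l := T`). -/


theorem sto_output_categories
    (l : ℕ) (hl : 1 ≤ l) (T : ℝ) (p t dmax smin smax : ℕ → ℝ)
    (hp : ∀ i < l, 0 ≤ p i)
    (hdmax : ∀ i < l, 0 ≤ dmax i)
    (hwin : ∀ i < l, sHat t smin (fun _ => 0) i ≤ smax i)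
    (hT : sHat t smin (fun _ => 0) (l - 1) + t (l - 1) ≤ T)
    (order : List ℕ) (hperm : order.Perm (List.range l))
    (hsorted : order.Pairwise fun i j => p j ≤ p i)
    (dstar : ℕ → ℝ) (hdstar : dstar = stoD l T t dmax smin smax order)
    (sstar : ℕ → ℝ) (hsstar : sstar = sHat t smin dstar) :
    ∀ i < l,
      dstar i = dmax i ∨
      dstar i = 0 ∨
      ∃ k : ℕ, i + k + 1 ≤ l ∧
        (∀ j, i ≤ j → j ≤ i + k →
          sstar j + dstar j + t j = (if j + 1 = l then T else sstar (j + 1))) ∧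
        (if i + k + 1 = l then T else sstar (i + k + 1)) =
          (if i + k + 1 = l then T else smax (i + k + 1)) := by
  
  intro i hi
  have hnd : order.Nodup := hperm.nodup_iff.mpr (List.nodup_range)
  have hiord : i ∈ order := hperm.mem_iff.mpr (List.mem_range.mpr hi)
  obtain ⟨L1, L2, horder⟩ := List.append_of_mem hiord
  subst horder
  rw [List.nodup_append, List.nodup_cons] at hnd
  have hiL1 : i ∉ L1 := fun h => hnd.2.2 i h i List.mem_cons_self rfl
  have hiL2 : i ∉ L2 := hnd.2.1.1
  set d0 : ℕ → ℝ := fun _ => 0 with hd0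
  set dmid := L1.foldl (stoStep l T t dmax smin smax) d0 with hdmid
  have hInv0 : STOAux.Inv t smin l T smax d0 := by
    constructor
    · intro m; exact le_refl 0
    · intro j hj
      unfold STOAux.E
      split_ifs with h
      · have h0 : d0 (l-1) = 0 := rfl
        rw [h0]
        linarith [hT]
      · exact hwin j (by omega)
  have hInvmid : STOAux.Inv t smin l T smax dmid :=
    STOAux.foldl_inv t smin l T dmax smax L1 d0 hdmax hInv0
  have hmid_i : dmid i = 0 := STOAux.foldl_apply_ne t smin l T dmax smax i L1 d0 hiL1
  set v : ℝ := min (dmax i)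
      ((Finset.Icc (i + 1) l).inf' (Finset.nonempty_Icc.mpr (by omega))
        fun j => (if j = l then T else smax j) - sHat t smin dmid i
          - ∑ m ∈ Finset.Ico i j, ((if m = i then 0 else dmid m) + t m)) with hv
  set dnext := stoStep l T t dmax smin smax dmid i with hdnext
  have hdnext_eq : dnext = Function.update dmid i v := by
    rw [hdnext]; unfold stoStep; rw [dif_pos hi]
  have hdstar2 : dstar = L2.foldl (stoStep l T t dmax smin smax) dnext := by
    rw [hdstar]; unfold stoD
    rw [List.foldl_append, List.foldl_cons]
  have hInvnext : STOAux.Inv t smin l T smax dnext :=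
    STOAux.inv_step t smin l T dmax smax hdmax dmid i hInvmid
  have hInvstar : STOAux.Inv t smin l T smax dstar := by
    rw [hdstar2]
    exact STOAux.foldl_inv t smin l T dmax smax L2 dnext hdmax hInvnext
  have hstar_i : dstar i = v := by
    rw [hdstar2, STOAux.foldl_apply_ne t smin l T dmax smax i L2 dnext hiL2,
      hdnext_eq, Function.update_self]
  rcases min_cases (dmax i)
      ((Finset.Icc (i + 1) l).inf' (Finset.nonempty_Icc.mpr (by omega))
        fun j => (if j = l then T else smax j) - sHat t smin dmid i
          - ∑ m ∈ Finset.Ico i j, ((if m = i then 0 else dmid m) + t m)) with hmin | hmin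
  · left
    rw [hstar_i, hv, hmin.1]
  · right; right
    obtain ⟨jstar, hjmem, hjeq⟩ := Finset.exists_mem_eq_inf'
      (Finset.nonempty_Icc.mpr (by omega : i + 1 ≤ l))
      (fun j => (if j = l then T else smax j) - sHat t smin dmid i
          - ∑ m ∈ Finset.Ico i j, ((if m = i then 0 else dmid m) + t m))
    rw [Finset.mem_Icc] at hjmem
    have hveq : v = (if jstar = l then T else smax jstar) - sHat t smin dmid i
        - ∑ m ∈ Finset.Ico i jstar, ((if m = i then 0 else dmid m) + t m) := by
      rw [hv, hmin.1, hjeq]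
    -- monotonicity from dnext to dstar
    have hmono : ∀ m, dnext m ≤ dstar m := by
      intro m
      by_cases hm : m ∈ L2
      · have hmi : m ≠ i := fun h => hiL2 (h ▸ hm)
        have hmL1 : m ∉ L1 := fun h => hnd.2.2 m h m (List.mem_cons_of_mem i hm) rfl
        have h1 : dnext m = 0 := by
          rw [hdnext_eq, Function.update_of_ne hmi, hdmid,
            STOAux.foldl_apply_ne t smin l T dmax smax m L1 d0 hmL1]
        rw [h1]
        exact hInvstar.1 m
      · rw [hdstar2, STOAux.foldl_apply_ne t smin l T dmax smax m L2 dnext hm]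
    have hsmono : ∀ j, sHat t smin dnext j ≤ sHat t smin dstar j :=
      fun j => STOAux.sHat_mono t smin dnext dstar j (fun m _ => hmono m)
    have hsnext_i : sHat t smin dnext i = sHat t smin dmid i := by
      rw [hdnext_eq]
      exact STOAux.sHat_congr t smin _ _ i
        (fun m hm => (Function.update_of_ne (by omega) _ _).symm) |>.symm
    -- chain equality at processing time
    have hchain_eq : sHat t smin dnext i + ∑ m ∈ Finset.Ico i jstar, (dnext m + t m)
        = (if jstar = l then T else smax jstar) := by
      rw [hsnext_i, hdnext_eq,
        STOAux.update_chain_sum t dmid i v jstar (by omega), hveq]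
      ring
    -- the final chain dominates
    have hge : (if jstar = l then T else smax jstar)
        ≤ sHat t smin dstar i + ∑ m ∈ Finset.Ico i jstar, (dstar m + t m) := by
      rw [← hchain_eq]
      have h1 := hsmono i
      have h2 : ∑ m ∈ Finset.Ico i jstar, (dnext m + t m)
          ≤ ∑ m ∈ Finset.Ico i jstar, (dstar m + t m) :=
        Finset.sum_le_sum (fun m _ => by have := hmono m; linarith)
      linarith
    have hle : STOAux.E t smin l dstar jstar ≤ (if jstar = l then T else smax jstar) :=
      hInvstar.2 jstar hjmem.2
    have hchain_le := STOAux.E_chain t smin l dstar i jstar hi (by omega) hjmem.2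
    have hsum_eq : sHat t smin dstar i + ∑ m ∈ Finset.Ico i jstar, (dstar m + t m)
        = (if jstar = l then T else smax jstar) :=
      le_antisymm (hchain_le.trans hle) hge
    have hEeq : STOAux.E t smin l dstar jstar = (if jstar = l then T else smax jstar) :=
      le_antisymm hle (hge.trans hchain_le)
    -- pointwise schedule equalities along the chain
    have hpt : ∀ m, i ≤ m → m ≤ jstar → m < l →
        sHat t smin dstar m
          = sHat t smin dstar i + ∑ mm ∈ Finset.Ico i m, (dstar mm + t mm) := by
      intro m him hmj hml
      have h1 := STOAux.sHat_chain t smin dstar i m him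
      have h2 := STOAux.E_chain t smin l dstar m jstar hml hmj hjmem.2
      have h3 := Finset.sum_Ico_consecutive (fun mm => dstar mm + t mm) him hmj
      rw [hEeq] at h2
      linarith
    refine ⟨jstar - i - 1, by omega, ?_, ?_⟩
    · intro j hij hjk
      have hj1 : j + 1 ≤ jstar := by omega
      have hjl : j < l := by omega
      have hj_eq := hpt j hij (by omega) hjl
      have hssum := Finset.sum_Ico_succ_top hij (fun mm => dstar mm + t mm)
      rw [hsstar]
      split_ifs with h
      · have hjs : jstar = l := by omega
        have hj1s : j + 1 = jstar := by omega
        rw [hjs, if_pos rfl] at hsum_eq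
        rw [← h, hssum] at hsum_eq
        linarith
      · have hj1l : j + 1 < l := by omega
        have hj1_eq := hpt (j+1) (by omega) hj1 hj1l
        rw [hssum] at hj1_eq
        linarith
    · have hk : i + (jstar - i - 1) + 1 = jstar := by omega
      rw [hk]
      split_ifs with h
      · rfl
      · unfold STOAux.E at hEeq
        rw [if_neg h, if_neg h] at hEeq
        rw [hsstar]
        exact hEeq
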